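/- Let V ∈ L¹(ℝ³) be radially symmetric with |·|^{−2} V_+ ∈ L¹(ℝ³) but |·|^{−2} V_− ∉ L¹(ℝ³), where V_± are the positive and negative parts of V. Then for every C > 0 there exists μ₀ such that for all μ ≥ μ₀: ∫_{ℝ³} V(x) (sin(√μ|x|)/(√μ|x|))² dx ≤ −C μ⁻¹. -/

import Mathlib

open MeasureTheory Filter Topology Real Set Metric
open scoped FourierTransform ENNReal

lemma rl_cos (f : ℝ → ℝ) (hf : Integrable f) :
    Tendsto (fun ω : ℝ => ∫ v, f v * Real.cos (ω * v)) atTop (𝓝 0) := by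
  have hfc : Integrable (fun v => (f v : ℂ)) := hf.ofReal
  have h := Real.tendsto_integral_exp_smul_cocompact (fun v => (f v : ℂ))
  have hdiv : Tendsto (fun ω : ℝ => ω / (2 * π)) atTop (cocompact ℝ) :=
    (tendsto_id.atTop_div_const (by positivity)).mono_right _root_.atTop_le_cocompact
  have h2 : Tendsto (fun ω : ℝ => ∫ v : ℝ, 𝐞 (-(v * (ω / (2 * π)))) • (f v : ℂ))
      atTop (𝓝 0) := h.comp hdiv
  have h3 := (Complex.continuous_re.tendsto 0).comp h2
  simp only [Complex.zero_re, Function.comp_def] at h3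
  convert h3 using 2 with ω
  have hint : Integrable fun v : ℝ => 𝐞 (-(v * (ω / (2 * π)))) • (f v : ℂ) :=
    by simpa [mul_comm] using (Real.fourierIntegral_convergent_iff (μ := volume) (f := fun v => (f v : ℂ)) (ω / (2 * π))).2 hfc
  rw [show ((∫ v : ℝ, 𝐞 (-(v * (ω / (2 * π)))) • (f v : ℂ)).re)
      = RCLike.re (∫ v : ℝ, 𝐞 (-(v * (ω / (2 * π)))) • (f v : ℂ)) from rfl,
    ← integral_re hint]
  refine integral_congr_ae (Eventually.of_forall fun v => ?_)
  simp only
  rw [Circle.smul_def, Real.fourierChar_apply]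
  have : (2 * π * -(v * (ω / (2 * π)))) = -(ω * v) := by
    field_simp
  rw [this]
  push_cast
  rw [Complex.exp_mul_I]
  rw [Complex.cos_neg, Complex.sin_neg, ← Complex.ofReal_mul, smul_eq_mul]
  simp only [RCLike.re_to_complex, neg_mul, sub_mul, add_mul, Complex.sub_re,
    Complex.add_re, Complex.mul_re, Complex.neg_re, Complex.neg_im, Complex.mul_im,
    Complex.cos_ofReal_re, Complex.cos_ofReal_im, Complex.sin_ofReal_re, Complex.sin_ofReal_im,
    Complex.ofReal_re, Complex.ofReal_im, Complex.I_re, Complex.I_im]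
  ring


noncomputable section

abbrev E3 : Type := EuclideanSpace ℝ (Fin 3)

lemma dimE3 : Module.finrank ℝ E3 = 3 := by
  simp [finrank_euclideanSpace]

lemma prod_snd_integrable_iff {α β : Type*} [MeasurableSpace α] [MeasurableSpace β]
    (P : Measure α) (Q : Measure β) [IsFiniteMeasure P] [SigmaFinite Q]
    (hP : P ≠ 0) (f : β → ℝ) :
    Integrable (fun p : α × β => f p.2) (P.prod Q) ↔ Integrable f Q := by
  constructor
  · intro h
    have h2 := (integrable_prod_iff h.aestronglyMeasurable).mp h
    haveI : (ae P).NeBot := ae_neBot.mpr hP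
    obtain ⟨x, hx⟩ := h2.1.exists
    exact hx
  · intro h
    refine ⟨h.aestronglyMeasurable.comp_snd, ?_⟩
    have hmes : AEMeasurable (fun p : α × β => ‖f p.2‖ₑ) (P.prod Q) :=
      h.aestronglyMeasurable.comp_snd.enorm
    rw [HasFiniteIntegral, lintegral_prod _ hmes]
    simp only [lintegral_const]
    exact ENNReal.mul_lt_top h.2 (measure_lt_top P univ)

lemma toSphere_ne_zero : (volume : Measure E3).toSphere ≠ 0 := by
  intro h
  have h2 := congrArg (fun m : Measure (sphere (0:E3) 1) => m univ) h
  simp only [Measure.toSphere_apply_univ, Measure.coe_zero, Pi.zero_apply] at h2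
  rw [dimE3] at h2
  have hb : (volume : Measure E3) (ball 0 1) ≠ 0 :=
    (measure_ball_pos volume 0 one_pos).ne'
  simp [hb] at h2
  linarith [Real.pi_pos]

lemma integrable_norm_comp_iff (f : ℝ → ℝ) :
    Integrable (fun x : E3 => f ‖x‖) ↔ IntegrableOn (fun r => r ^ 2 * f r) (Ioi 0) := by
  have hSmeas : MeasurableSet ({0}ᶜ : Set E3) := (measurableSet_singleton 0).compl
  -- step 1 : to the subtype
  have step1 : Integrable (fun x : E3 => f ‖x‖) ↔
      Integrable ((fun x : E3 => f ‖x‖) ∘ (Subtype.val : ({0}ᶜ : Set E3) → E3))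
        (volume.comap Subtype.val) := by
    rw [← (MeasurableEmbedding.subtype_coe hSmeas).integrable_map_iff,
      map_comap_subtype_coe hSmeas, restrict_compl_singleton]
  -- step 2 : through the homeomorphism
  have hmp := (volume : Measure E3).measurePreserving_homeomorphUnitSphereProd
  rw [dimE3] at hmp
  have step2 : Integrable ((fun x : E3 => f ‖x‖) ∘ (Subtype.val : ({0}ᶜ : Set E3) → E3))
        (volume.comap Subtype.val) ↔
      Integrable (fun p : sphere (0:E3) 1 × Ioi (0:ℝ) => f p.2)
        ((volume : Measure E3).toSphere.prod (.volumeIoiPow 2)) := by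
    rw [← hmp.integrable_comp_emb (Homeomorph.measurableEmbedding _)]
    constructor <;> intro h <;> [skip; skip] <;>
      · refine h.congr (Eventually.of_forall fun x => ?_)
        simp [Function.comp]
  -- step 3 : drop the sphere factor
  have step3 : Integrable (fun p : sphere (0:E3) 1 × Ioi (0:ℝ) => f p.2)
        ((volume : Measure E3).toSphere.prod (.volumeIoiPow 2)) ↔
      Integrable (fun r : Ioi (0:ℝ) => f r) (.volumeIoiPow 2) :=
    prod_snd_integrable_iff _ (Measure.volumeIoiPow 2) toSphere_ne_zero (fun r : Ioi (0:ℝ) => f r.1)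
  -- step 4 : withDensity and back to ℝ
  have step4 : Integrable (fun r : Ioi (0:ℝ) => f r) (.volumeIoiPow 2) ↔
      IntegrableOn (fun r => r ^ 2 * f r) (Ioi 0) := by
    rw [Measure.volumeIoiPow,
      integrable_withDensity_iff_integrable_smul'
        ((measurable_subtype_coe.pow_const 2).ennreal_ofReal)
        (Eventually.of_forall fun r => ENNReal.ofReal_lt_top)]
    have heq : (fun r : Ioi (0:ℝ) => (ENNReal.ofReal (r.1 ^ 2)).toReal • f r.1)
        = fun r : Ioi (0:ℝ) => (fun s => s ^ 2 * f s) r.1 := by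
      funext r
      simp [ENNReal.toReal_ofReal (sq_nonneg r.1), smul_eq_mul]
    rw [heq]
    have h5 := (MeasurableEmbedding.subtype_coe measurableSet_Ioi).integrable_map_iff
      (g := fun s : ℝ => s ^ 2 * f s) (μ := volume.comap (Subtype.val : (Ioi (0:ℝ)) → ℝ))
    rw [map_comap_subtype_coe measurableSet_Ioi] at h5
    exact h5.symm
  rw [step1, step2, step3, step4]

lemma integral_norm_comp (f : ℝ → ℝ) :
    ∫ x : E3, f ‖x‖ = (3 * (volume (ball (0:E3) 1)).toReal) * ∫ r in Ioi 0, r ^ 2 * f r := by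
  have h := integral_fun_norm_addHaar (volume : Measure E3) f
  rw [dimE3] at h
  rw [h]
  simp only [nsmul_eq_mul, smul_eq_mul, Nat.cast_ofNat]
  rw [measureReal_def]
  ring

section oneD

variable {g : ℝ → ℝ}

lemma hg_aesm (h2 : IntegrableOn (fun r => r ^ 2 * g r) (Ioi 0)) :
    AEStronglyMeasurable g (volume.restrict (Ioi 0)) := by
  have h3 : AEStronglyMeasurable (fun r : ℝ => (r ^ 2 * g r) * (r ^ 2)⁻¹)
      (volume.restrict (Ioi 0)) :=
    h2.aestronglyMeasurable.mul ((measurable_id.pow_const 2).inv.aestronglyMeasurable)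
  refine h3.congr ?_
  filter_upwards [ae_restrict_mem measurableSet_Ioi] with r hr
  have hne : (r : ℝ) ^ 2 ≠ 0 := pow_ne_zero 2 (ne_of_gt (mem_Ioi.mp hr))
  field_simp
  exact mul_div_cancel_left₀ (g r) (ne_of_gt (mem_Ioi.mp hr))

lemma hgm_aesm (h2 : IntegrableOn (fun r => r ^ 2 * g r) (Ioi 0)) :
    AEStronglyMeasurable (fun r => max (-g r) 0) (volume.restrict (Ioi 0)) := by
  have := ((hg_aesm h2).neg.sup (aestronglyMeasurable_const (b := (0:ℝ))))
  exact this.congr (Eventually.of_forall fun r => rfl)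

lemma tail_int (h2 : IntegrableOn (fun r => r ^ 2 * g r) (Ioi 0)) {a : ℝ} (ha : 0 < a) :
    IntegrableOn (fun r => max (-g r) 0) (Ioi a) := by
  refine Integrable.mono'
    (((h2.mono_set (Ioi_subset_Ioi ha.le)).norm).const_mul (a⁻¹ ^ 2))
    ((hgm_aesm h2).mono_measure (Measure.restrict_mono (Ioi_subset_Ioi ha.le) le_rfl)) ?_
  filter_upwards [ae_restrict_mem measurableSet_Ioi] with r hr
  have hr0 : 0 < r := ha.trans hr
  have h1 : ‖max (-g r) 0‖ ≤ |g r| := by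
    rw [Real.norm_eq_abs, abs_of_nonneg (le_max_right _ _)]
    exact max_le (neg_le_abs _) (abs_nonneg _)
  refine h1.trans ?_
  have hnorm : ‖r ^ 2 * g r‖ = r ^ 2 * |g r| := by
    rw [Real.norm_eq_abs, abs_mul, abs_of_nonneg (sq_nonneg r)]
  rw [hnorm, inv_pow, inv_mul_eq_div, le_div_iff₀ (by positivity)]
  have haR : a < r := mem_Ioi.mp hr
  have haq : a ^ 2 ≤ r ^ 2 := by nlinarith
  have := mul_le_mul_of_nonneg_left haq (abs_nonneg (g r))
  nlinarith

lemma tail_big (h2 : IntegrableOn (fun r => r ^ 2 * g r) (Ioi 0))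
    (hm : ¬ IntegrableOn (fun r => max (-g r) 0) (Ioi 0)) (M : ℝ) :
    ∃ a : ℝ, 0 < a ∧ M ≤ ∫ r in Ioi a, max (-g r) 0 := by
  by_contra hcon
  push_neg at hcon
  apply hm
  constructor
  · exact hgm_aesm h2
  · have hle : (0:ℝ→ℝ) ≤ᵐ[volume.restrict (Ioi 0)] fun r => max (-g r) 0 :=
      Eventually.of_forall fun r => le_max_right _ _
    rw [hasFiniteIntegral_iff_ofReal hle]
    have hunion : (⋃ n : ℕ, Ioi ((n + 1 : ℝ)⁻¹)) = Ioi (0:ℝ) := by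
      ext x
      simp only [mem_iUnion, mem_Ioi]
      constructor
      · rintro ⟨n, hn⟩
        exact lt_trans (by positivity) hn
      · intro hx
        obtain ⟨n, hn⟩ := exists_nat_one_div_lt hx
        exact ⟨n, by rwa [one_div] at hn⟩
    have hdir : Directed (· ⊆ ·) (fun n : ℕ => Ioi ((n + 1 : ℝ)⁻¹)) := by
      refine directed_of_isDirected_le ?_
      intro m n hmn
      refine Ioi_subset_Ioi ?_
      gcongr
    rw [← hunion, setLIntegral_iUnion_of_directed _ hdir]
    have hb : ∀ n : ℕ, (∫⁻ r in Ioi ((n + 1 : ℝ)⁻¹), ENNReal.ofReal (max (-g r) 0))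
        ≤ ENNReal.ofReal M := by
      intro n
      have hpos : (0:ℝ) < (n + 1 : ℝ)⁻¹ := by positivity
      rw [← ofReal_integral_eq_lintegral_ofReal (tail_int h2 hpos)
        (Eventually.of_forall fun r => le_max_right _ _)]
      exact ENNReal.ofReal_le_ofReal (hcon _ hpos).le
    exact lt_of_le_of_lt (iSup_le hb) ENNReal.ofReal_lt_top

lemma oneD (h2 : IntegrableOn (fun r => r ^ 2 * g r) (Ioi 0))
    (hp : IntegrableOn (fun r => max (g r) 0) (Ioi 0))
    (hm : ¬ IntegrableOn (fun r => max (-g r) 0) (Ioi 0)) :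
    Tendsto (fun ω : ℝ => ∫ r in Ioi 0, g r * Real.sin (ω * r) ^ 2) atTop atBot := by
  -- integrability of the pieces, for any ω
  have hgm_sin : ∀ ω : ℝ, IntegrableOn (fun r => max (-g r) 0 * Real.sin (ω * r) ^ 2) (Ioi 0) := by
    intro ω
    refine Integrable.mono' ((h2.norm).const_mul (ω ^ 2))
      ((hgm_aesm h2).mul
        ((Real.continuous_sin.comp (continuous_const.mul continuous_id)).pow 2
          ).aestronglyMeasurable) ?_
    filter_upwards [ae_restrict_mem measurableSet_Ioi] with r hr
    have hr0 : (0:ℝ) < r := hr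
    have h1 : max (-g r) 0 ≤ |g r| := max_le (neg_le_abs _) (abs_nonneg _)
    have h2' : Real.sin (ω * r) ^ 2 ≤ (ω * r) ^ 2 := Real.sin_sq_le_sq
    have hnn : 0 ≤ max (-g r) 0 := le_max_right _ _
    rw [Real.norm_eq_abs, abs_of_nonneg (mul_nonneg hnn (sq_nonneg _)),
      Real.norm_eq_abs, abs_mul, abs_of_nonneg (sq_nonneg r)]
    calc max (-g r) 0 * Real.sin (ω * r) ^ 2 ≤ |g r| * (ω * r) ^ 2 := by
          exact mul_le_mul h1 h2' (sq_nonneg _) (abs_nonneg _)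
      _ = ω ^ 2 * (r ^ 2 * |g r|) := by ring
  have hgp_sin : ∀ ω : ℝ, IntegrableOn (fun r => max (g r) 0 * Real.sin (ω * r) ^ 2) (Ioi 0) := by
    intro ω
    refine Integrable.mono' hp
      ((hp.aestronglyMeasurable).mul
        ((Real.continuous_sin.comp (continuous_const.mul continuous_id)).pow 2
          ).aestronglyMeasurable) ?_
    refine Eventually.of_forall fun r => ?_
    have hnn : 0 ≤ max (g r) 0 := le_max_right _ _
    rw [Real.norm_eq_abs, abs_of_nonneg (mul_nonneg hnn (sq_nonneg _))]
    exact mul_le_of_le_one_right hnn (Real.sin_sq_le_one _)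
  rw [tendsto_atBot]
  intro b
  set K := ∫ r in Ioi 0, max (g r) 0 with hK
  obtain ⟨a, ha, hT⟩ := tail_big h2 hm (2 * (K - b) + 1)
  set T := ∫ r in Ioi a, max (-g r) 0 with hTdef
  -- Riemann-Lebesgue for the tail
  have hind : Integrable (Set.indicator (Ioi a) (fun r => max (-g r) 0)) := by
    rw [integrable_indicator_iff measurableSet_Ioi]
    exact tail_int h2 ha
  have hrl := (rl_cos _ hind).comp (tendsto_id.const_mul_atTop (two_pos) : Tendsto (fun ω : ℝ => 2 * ω) atTop atTop)
  rw [Metric.tendsto_nhds] at hrl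
  filter_upwards [hrl 1 one_pos] with ω hω
  rw [Function.comp, Real.dist_eq, sub_zero] at hω
  -- name the cosine integral
  have hcos_eq : (∫ v, Set.indicator (Ioi a) (fun r => max (-g r) 0) v * Real.cos (2 * ω * v))
      = ∫ r in Ioi a, max (-g r) 0 * Real.cos (2 * ω * r) := by
    rw [← integral_indicator measurableSet_Ioi]
    congr 1
    ext v
    by_cases hv : v ∈ Ioi a <;> simp [Set.indicator_of_mem, Set.indicator_of_notMem, hv]
  rw [hcos_eq] at hω
  -- integrability of gm * cos on Ioi a
  have hgmcos : IntegrableOn (fun r => max (-g r) 0 * Real.cos (2 * ω * r)) (Ioi a) := by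
    refine Integrable.mono' (tail_int h2 ha)
      (((hgm_aesm h2).mono_measure
          (Measure.restrict_mono (Ioi_subset_Ioi ha.le) le_rfl)).mul
        ((Real.continuous_cos.comp (continuous_const.mul continuous_id))).aestronglyMeasurable) ?_
    refine Eventually.of_forall fun r => ?_
    rw [Real.norm_eq_abs, abs_mul]
    have hnn : 0 ≤ max (-g r) 0 := le_max_right _ _
    rw [abs_of_nonneg hnn]
    exact mul_le_of_le_one_right hnn (Real.abs_cos_le_one _)
  -- the tail sin² integral
  have htail_eq : (∫ r in Ioi a, max (-g r) 0 * Real.sin (ω * r) ^ 2)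
      = T / 2 - (∫ r in Ioi a, max (-g r) 0 * Real.cos (2 * ω * r)) / 2 := by
    have : ∀ r : ℝ, max (-g r) 0 * Real.sin (ω * r) ^ 2
        = max (-g r) 0 / 2 - (max (-g r) 0 * Real.cos (2 * ω * r)) / 2 := by
      intro r
      rw [Real.sin_sq_eq_half_sub]
      have : 2 * (ω * r) = 2 * ω * r := by ring
      rw [this]
      ring
    rw [integral_congr_ae (Eventually.of_forall this),
      integral_sub ((tail_int h2 ha).div_const 2) (hgmcos.div_const 2),
      integral_div, integral_div]
  -- main estimate
  have e1 : (∫ r in Ioi 0, g r * Real.sin (ω * r) ^ 2)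
      = (∫ r in Ioi 0, max (g r) 0 * Real.sin (ω * r) ^ 2)
        - ∫ r in Ioi 0, max (-g r) 0 * Real.sin (ω * r) ^ 2 := by
    rw [← integral_sub (hgp_sin ω) (hgm_sin ω)]
    refine integral_congr_ae (Eventually.of_forall fun r => ?_)
    simp only
    rw [← sub_mul, max_zero_sub_max_neg_zero_eq_self]
  have e2 : (∫ r in Ioi 0, max (g r) 0 * Real.sin (ω * r) ^ 2) ≤ K := by
    refine integral_mono (hgp_sin ω) hp fun r => ?_
    exact mul_le_of_le_one_right (le_max_right _ _) (Real.sin_sq_le_one _)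
  have e3 : (∫ r in Ioi a, max (-g r) 0 * Real.sin (ω * r) ^ 2)
      ≤ ∫ r in Ioi 0, max (-g r) 0 * Real.sin (ω * r) ^ 2 := by
    refine setIntegral_mono_set (hgm_sin ω) ?_ ?_
    · exact Eventually.of_forall fun r => mul_nonneg (le_max_right _ _) (sq_nonneg _)
    · exact HasSubset.Subset.eventuallyLE (Ioi_subset_Ioi ha.le)
  have e4 : |∫ r in Ioi a, max (-g r) 0 * Real.cos (2 * ω * r)| < 1 := hω
  rw [e1]
  rw [htail_eq] at e3
  have := abs_lt.mp e4
  linarith [e2, e3, hT, this.1, this.2]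

end oneD


theorem vmu_le_neg_const_div_mu
    (V : EuclideanSpace ℝ (Fin 3) → ℝ) (g : ℝ → ℝ)
    (hrad : ∀ x, V x = g ‖x‖)
    (hV1 : Integrable V)
    (hplus : Integrable (fun x => max (V x) 0 / ‖x‖ ^ 2))
    (hminus : ¬ Integrable (fun x => max (-V x) 0 / ‖x‖ ^ 2)) :
    ∀ C > (0 : ℝ), ∃ μ₀ : ℝ, ∀ μ ≥ μ₀,
      (∫ x, V x * (Real.sin (Real.sqrt μ * ‖x‖) / (Real.sqrt μ * ‖x‖)) ^ 2)
        ≤ -C / μ := by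
  have h2' : IntegrableOn (fun r => r ^ 2 * g r) (Ioi 0) := by
    rw [← integrable_norm_comp_iff]
    exact hV1.congr (Eventually.of_forall fun x => hrad x)
  have hp1 : Integrable (fun x : E3 => (fun r => max (g r) 0 / r ^ 2) ‖x‖) := by
    refine hplus.congr (Eventually.of_forall fun x => ?_)
    simp only [hrad x]
  have hp' : IntegrableOn (fun r => max (g r) 0) (Ioi 0) := by
    refine ((integrable_norm_comp_iff (fun r => max (g r) 0 / r ^ 2)).mp hp1).congr_fun (fun r hr => ?_) measurableSet_Ioi
    have hne : (r:ℝ) ^ 2 ≠ 0 := pow_ne_zero 2 (ne_of_gt hr)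
    beta_reduce
    rw [mul_comm, div_mul_cancel₀ _ hne]
  have hm' : ¬ IntegrableOn (fun r => max (-g r) 0) (Ioi 0) := by
    intro hcon
    apply hminus
    have hstep : IntegrableOn (fun r => r ^ 2 * (max (-g r) 0 / r ^ 2)) (Ioi 0) := by
      refine hcon.congr_fun (fun r hr => ?_) measurableSet_Ioi
      have hne : (r:ℝ) ^ 2 ≠ 0 := pow_ne_zero 2 (ne_of_gt hr)
      rw [mul_comm, div_mul_cancel₀ _ hne]
    have h3 := (integrable_norm_comp_iff (fun s => max (-g s) 0 / s ^ 2)).mpr hstep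
    exact h3.congr (Eventually.of_forall fun x => by simp only [hrad x])
  have htend := oneD h2' hp' hm'
  intro C hC
  set c := 3 * (volume (ball (0:E3) 1)).toReal with hc
  have hcpos : 0 < c := by
    have h1 : (0:ℝ≥0∞) < volume (ball (0:E3) 1) := measure_ball_pos _ _ one_pos
    have h2 : volume (ball (0:E3) 1) < ⊤ := measure_ball_lt_top
    have h3 := ENNReal.toReal_pos h1.ne' h2.ne
    positivity
  rw [tendsto_atBot] at htend
  obtain ⟨A, hA⟩ := (htend (-C / c)).exists_forall_of_atTop
  refine ⟨max (A ^ 2) 1, fun μ hμ => ?_⟩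
  have hμ1 : (1:ℝ) ≤ μ := le_trans (le_max_right _ _) hμ
  have hμ0 : (0:ℝ) < μ := lt_of_lt_of_le one_pos hμ1
  have hsq : A ≤ Real.sqrt μ := by
    calc A ≤ |A| := le_abs_self A
      _ = Real.sqrt (A ^ 2) := (Real.sqrt_sq_eq_abs A).symm
      _ ≤ Real.sqrt μ := Real.sqrt_le_sqrt (le_trans (le_max_left _ _) hμ)
  have hΦ := hA _ hsq
  have hval : (∫ x, V x * (Real.sin (Real.sqrt μ * ‖x‖) / (Real.sqrt μ * ‖x‖)) ^ 2)
      = ∫ x : E3, (fun s => g s * (Real.sin (Real.sqrt μ * s) / (Real.sqrt μ * s)) ^ 2) ‖x‖ := by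
    refine integral_congr_ae (Eventually.of_forall fun x => ?_)
    simp only [hrad x]
  rw [hval, integral_norm_comp (fun s => g s * (Real.sin (Real.sqrt μ * s) / (Real.sqrt μ * s)) ^ 2)]
  have hinner : (∫ r in Ioi 0, r ^ 2 *
        ((fun s => g s * (Real.sin (Real.sqrt μ * s) / (Real.sqrt μ * s)) ^ 2) r))
      = (∫ r in Ioi 0, g r * Real.sin (Real.sqrt μ * r) ^ 2) / μ := by
    rw [← integral_div]
    refine setIntegral_congr_fun measurableSet_Ioi fun r hr => ?_
    have hr0 : (0:ℝ) < r := hr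
    have hsμ : 0 < Real.sqrt μ := Real.sqrt_pos.mpr hμ0
    have hμeq : Real.sqrt μ ^ 2 = μ := Real.sq_sqrt hμ0.le
    simp only
    rw [div_pow, mul_pow, hμeq]
    field_simp
  rw [hinner]
  calc c * ((∫ r in Ioi 0, g r * Real.sin (Real.sqrt μ * r) ^ 2) / μ)
      ≤ c * ((-C / c) / μ) := by gcongr
    _ = -C / μ := by field_simp
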